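/- Let H_{m,n}(𝟏, (−1)^k) denote the two-point Hermite interpolant with data p_j = 1 for all 0 ≤ j ≤ m and q_j = (−1)^j for all 0 ≤ j ≤ n. Then ∫_0^1 H_{m,n}(𝟏, (−1)^k)(s) ds = 2Ψ(n+m+3) − Ψ(m+3) − Ψ(n+3) + (n+m+4)/((n+2)(m+2)), where Ψ(n+1) = −γ + Σ_{k=1}^{n} 1/k is the digamma function evaluated at integers. -/

import Mathlib

noncomputable def blend (m n : ℕ) (p q : ℕ → ℝ) (s : ℝ) : ℝ :=
  (∑ j ∈ Finset.range (m + 1),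
      (∑ k ∈ Finset.range (m - j + 1),
          ((n + k).choose k : ℝ) * s ^ (k + j) * (1 - s) ^ (n + 1)) * p j)
  + ∑ j ∈ Finset.range (n + 1),
      (∑ k ∈ Finset.range (n - j + 1),
          ((m + k).choose k : ℝ) * s ^ (m + 1) * (1 - s) ^ (k + j)) * (-1 : ℝ) ^ j * q j

noncomputable def harm (k : ℕ) : ℝ := ∑ i ∈ Finset.range k, 1 / (i + 1 : ℝ)

/-- Triangular reindexing of a double sum. -/
lemma tri_sum (m : ℕ) (g : ℕ → ℕ → ℝ) :
    ∑ j ∈ Finset.range (m + 1), ∑ k ∈ Finset.range (m - j + 1), g j k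
      = ∑ t ∈ Finset.range (m + 1), ∑ k ∈ Finset.range (t + 1), g (t - k) k := by
  rw [Finset.sum_sigma', Finset.sum_sigma']
  refine Finset.sum_nbij' (fun p => (⟨p.1 + p.2, p.2⟩ : Σ _ : ℕ, ℕ))
    (fun p => (⟨p.1 - p.2, p.2⟩ : Σ _ : ℕ, ℕ)) ?_ ?_ ?_ ?_ ?_ <;>
  · rintro ⟨x, y⟩ h
    simp only [Finset.mem_sigma, Finset.mem_range, Sigma.mk.inj_iff, heq_eq_eq,
      Nat.add_sub_cancel] at h ⊢
    try omega
    try exact ⟨by omega, trivial⟩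

/-- Hockey stick identity. -/
lemma hockey (n t : ℕ) :
    ∑ k ∈ Finset.range (t + 1), (n + k).choose k = (n + t + 1).choose t := by
  have h1 : ∀ k, (n + k).choose k = (n + k).choose n := by
    intro k; rw [Nat.choose_symm_add]
  calc ∑ k ∈ Finset.range (t + 1), (n + k).choose k
      = ∑ i ∈ Finset.Icc n (n + t), i.choose n := by
        rw [Finset.sum_congr rfl fun k _ => h1 k]
        apply Finset.sum_nbij' (fun k => n + k) (fun i => i - n)
        · intro k hk; simp only [Finset.mem_range] at hk; simp only [Finset.mem_Icc]; omega
        · intro i hi; simp only [Finset.mem_Icc] at hi; simp only [Finset.mem_range]; omega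
        · intro k _; omega
        · intro i hi; simp only [Finset.mem_Icc] at hi; omega
        · intro k _; rfl
    _ = (n + t + 1).choose (n + 1) := Nat.sum_Icc_choose (n + t) n
    _ = (n + t + 1).choose t := by
        have : n + t + 1 = t + (n + 1) := by omega
        rw [this]
        exact (Nat.choose_symm_add).symm

/-- The real Beta integral at natural arguments. -/
lemma betaInt (b a : ℕ) :
    ∫ x in (0 : ℝ)..1, x ^ a * (1 - x) ^ b
      = (a.factorial * b.factorial : ℝ) / (a + b + 1).factorial := by
  induction b generalizing a with
  | zero =>
    simp only [pow_zero, mul_one, integral_pow]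
    rw [Nat.factorial_zero, Nat.add_zero, Nat.factorial_succ]
    have h0 : (0 : ℝ) ^ (a + 1) = 0 := by simp
    rw [h0, one_pow]
    have hf : ((a.factorial : ℝ)) ≠ 0 := by positivity
    have ha : ((a : ℝ) + 1) ≠ 0 := by positivity
    push_cast
    field_simp
    norm_num
  | succ b ih =>
    have key : ∫ x in (0 : ℝ)..1,
        (((a : ℝ) + 1) * (x ^ a * (1 - x) ^ (b + 1)) - ((b : ℝ) + 1) * (x ^ (a + 1) * (1 - x) ^ b))
        = 0 := by
      have hder : ∀ x ∈ Set.uIcc (0 : ℝ) 1, HasDerivAt (fun y : ℝ => y ^ (a + 1) * (1 - y) ^ (b + 1))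
          (((a : ℝ) + 1) * (x ^ a * (1 - x) ^ (b + 1)) - ((b : ℝ) + 1) * (x ^ (a + 1) * (1 - x) ^ b)) x := by
        intro x _
        have h1 : HasDerivAt (fun y : ℝ => y ^ (a + 1)) ((a + 1 : ℕ) * x ^ a) x := by
          simpa using hasDerivAt_pow (a + 1) x
        have h2 : HasDerivAt (fun y : ℝ => (1 - y) ^ (b + 1))
            (((b + 1 : ℕ) * (1 - x) ^ b) * (-1)) x := by
          have hy : HasDerivAt (fun y : ℝ => 1 - y) (-1) x := by
            simpa using (hasDerivAt_id x).const_sub 1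
          exact (hasDerivAt_pow (b + 1) (1 - x)).comp x hy
        have : HasDerivAt (fun y : ℝ => y ^ (a + 1) * (1 - y) ^ (b + 1)) _ x := h1.mul h2
        convert this using 1
        push_cast
        ring_nf
      have hcont : IntervalIntegrable (fun x : ℝ =>
          ((a : ℝ) + 1) * (x ^ a * (1 - x) ^ (b + 1)) - ((b : ℝ) + 1) * (x ^ (a + 1) * (1 - x) ^ b))
          MeasureTheory.volume 0 1 := by
        apply Continuous.intervalIntegrable
        fun_prop
      have := intervalIntegral.integral_eq_sub_of_hasDerivAt hder hcont
      simpa using this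
    have hi1 : IntervalIntegrable (fun x : ℝ => x ^ a * (1 - x) ^ (b + 1))
        MeasureTheory.volume 0 1 := by
      apply Continuous.intervalIntegrable; fun_prop
    have hi2 : IntervalIntegrable (fun x : ℝ => x ^ (a + 1) * (1 - x) ^ b)
        MeasureTheory.volume 0 1 := by
      apply Continuous.intervalIntegrable; fun_prop
    rw [intervalIntegral.integral_sub (hi1.const_mul _) (hi2.const_mul _),
      intervalIntegral.integral_const_mul, intervalIntegral.integral_const_mul,
      sub_eq_zero] at key
    have ha : ((a : ℝ) + 1) ≠ 0 := by positivity
    have : ∫ x in (0 : ℝ)..1, x ^ a * (1 - x) ^ (b + 1)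
        = ((b : ℝ) + 1) / ((a : ℝ) + 1) * ∫ x in (0 : ℝ)..1, x ^ (a + 1) * (1 - x) ^ b := by
      field_simp
      linarith [key]
    rw [this, ih (a + 1)]
    have h1 : (a + 1 + b + 1) = (a + (b + 1) + 1) := by omega
    rw [h1]
    have hf : ((a + (b + 1) + 1).factorial : ℝ) ≠ 0 := by positivity
    rw [Nat.factorial_succ (a), Nat.factorial_succ b]
    push_cast
    field_simp

lemma choose_beta (n t : ℕ) :
    ((n + 1 + t).choose t : ℝ) * ((t.factorial * (n + 1).factorial : ℝ) / (t + (n + 1) + 1).factorial)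
      = 1 / ((n : ℝ) + t + 2) := by
  have hle : t ≤ n + 1 + t := by omega
  rw [Nat.cast_choose ℝ hle]
  have h1 : n + 1 + t - t = n + 1 := by omega
  rw [h1]
  have h2 : t + (n + 1) + 1 = (n + 1 + t) + 1 := by omega
  rw [h2]
  have hfact : (((n + 1 + t) + 1).factorial : ℝ) = ((n : ℝ) + t + 2) * ((n + 1 + t).factorial : ℝ) := by
    rw [Nat.factorial_succ]; push_cast; ring
  rw [hfact]
  have hf1 : (t.factorial : ℝ) ≠ 0 := by positivity
  have hf2 : ((n + 1).factorial : ℝ) ≠ 0 := by positivity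
  have hf3 : ((n + 1 + t).factorial : ℝ) ≠ 0 := by positivity
  have hf4 : ((n : ℝ) + t + 2) ≠ 0 := by positivity
  field_simp

lemma sum_shift_harm (n M : ℕ) :
    ∑ t ∈ Finset.range M, 1 / ((n : ℝ) + t + 2) = harm (n + 1 + M) - harm (n + 1) := by
  induction M with
  | zero => simp
  | succ M ih =>
    rw [Finset.sum_range_succ, ih]
    have h1 : n + 1 + (M + 1) = (n + 1 + M) + 1 := by omega
    have hstep : harm ((n + 1 + M) + 1) = harm (n + 1 + M) + 1 / ((n : ℝ) + M + 2) := by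
      rw [harm, Finset.sum_range_succ, ← harm]
      push_cast
      ring_nf
    rw [h1, hstep]
    ring

theorem integral_blend_ones_alt (m n : ℕ) :
    ∫ s in (0 : ℝ)..1, blend m n (fun _ => 1) (fun j => (-1 : ℝ) ^ j) s
      = 2 * harm (n + m + 2) - harm (m + 2) - harm (n + 2)
        + (n + m + 4 : ℝ) / ((n + 2 : ℝ) * (m + 2 : ℝ)) := by
  -- Step 1: pointwise simplification of blend
  have hblend : ∀ s : ℝ, blend m n (fun _ => 1) (fun j => (-1 : ℝ) ^ j) s
      = (∑ t ∈ Finset.range (m + 1), ((n + 1 + t).choose t : ℝ) * (s ^ t * (1 - s) ^ (n + 1)))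
        + ∑ t ∈ Finset.range (n + 1), ((m + 1 + t).choose t : ℝ) * (s ^ (m + 1) * (1 - s) ^ t) := by
    intro s
    unfold blend
    congr 1
    · -- first double sum
      simp only [mul_one]
      rw [tri_sum m (fun j k => ((n + k).choose k : ℝ) * s ^ (k + j) * (1 - s) ^ (n + 1))]
      apply Finset.sum_congr rfl
      intro t ht
      simp only [Finset.mem_range] at ht
      have : ∀ k ∈ Finset.range (t + 1),
          ((n + k).choose k : ℝ) * s ^ (k + (t - k)) * (1 - s) ^ (n + 1)
            = ((n + k).choose k : ℝ) * (s ^ t * (1 - s) ^ (n + 1)) := by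
        intro k hk
        simp only [Finset.mem_range] at hk
        have : k + (t - k) = t := by omega
        rw [this]; ring
      rw [Finset.sum_congr rfl this, ← Finset.sum_mul]
      rw [← Nat.cast_sum, hockey]
      have h : n + t + 1 = n + 1 + t := by omega
      rw [h]
    · -- second double sum
      have hq : ∀ j : ℕ, ((-1 : ℝ) ^ j) * ((-1 : ℝ) ^ j) = 1 := by
        intro j
        rw [← pow_add]
        exact Even.neg_one_pow ⟨j, rfl⟩
      have step : ∀ j ∈ Finset.range (n + 1),
          (∑ k ∈ Finset.range (n - j + 1),
            ((m + k).choose k : ℝ) * s ^ (m + 1) * (1 - s) ^ (k + j)) * (-1 : ℝ) ^ j * (-1 : ℝ) ^ j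
          = ∑ k ∈ Finset.range (n - j + 1),
            ((m + k).choose k : ℝ) * s ^ (m + 1) * (1 - s) ^ (k + j) := by
        intro j _
        rw [mul_assoc, hq j, mul_one]
      rw [Finset.sum_congr rfl step]
      rw [tri_sum n (fun j k => ((m + k).choose k : ℝ) * s ^ (m + 1) * (1 - s) ^ (k + j))]
      apply Finset.sum_congr rfl
      intro t ht
      simp only [Finset.mem_range] at ht
      have : ∀ k ∈ Finset.range (t + 1),
          ((m + k).choose k : ℝ) * s ^ (m + 1) * (1 - s) ^ (k + (t - k))
            = ((m + k).choose k : ℝ) * (s ^ (m + 1) * (1 - s) ^ t) := by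
        intro k hk
        simp only [Finset.mem_range] at hk
        have : k + (t - k) = t := by omega
        rw [this]; ring
      rw [Finset.sum_congr rfl this, ← Finset.sum_mul, ← Nat.cast_sum, hockey]
      have h : m + t + 1 = m + 1 + t := by omega
      rw [h]
  -- Step 2: rewrite the integral
  have hcongr : ∫ s in (0 : ℝ)..1, blend m n (fun _ => 1) (fun j => (-1 : ℝ) ^ j) s
      = ∫ s in (0 : ℝ)..1,
          ((∑ t ∈ Finset.range (m + 1), ((n + 1 + t).choose t : ℝ) * (s ^ t * (1 - s) ^ (n + 1)))
          + ∑ t ∈ Finset.range (n + 1), ((m + 1 + t).choose t : ℝ) * (s ^ (m + 1) * (1 - s) ^ t)) := by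
    apply intervalIntegral.integral_congr
    intro s _
    exact hblend s
  rw [hcongr]
  have int1 : ∀ (a b : ℕ), IntervalIntegrable (fun x : ℝ => x ^ a * (1 - x) ^ b)
      MeasureTheory.volume 0 1 := by
    intro a b
    apply Continuous.intervalIntegrable; fun_prop
  have hint_sum1 : IntervalIntegrable (fun s : ℝ =>
      ∑ t ∈ Finset.range (m + 1), ((n + 1 + t).choose t : ℝ) * (s ^ t * (1 - s) ^ (n + 1)))
      MeasureTheory.volume 0 1 := by
    apply Continuous.intervalIntegrable; fun_prop
  have hint_sum2 : IntervalIntegrable (fun s : ℝ =>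
      ∑ t ∈ Finset.range (n + 1), ((m + 1 + t).choose t : ℝ) * (s ^ (m + 1) * (1 - s) ^ t))
      MeasureTheory.volume 0 1 := by
    apply Continuous.intervalIntegrable; fun_prop
  rw [intervalIntegral.integral_add hint_sum1 hint_sum2]
  rw [intervalIntegral.integral_finset_sum (fun t _ => ((int1 t (n+1)).const_mul _)),
      intervalIntegral.integral_finset_sum (fun t _ => ((int1 (m+1) t).const_mul _))]
  have e1 : ∀ t : ℕ, ∫ s in (0 : ℝ)..1, ((n + 1 + t).choose t : ℝ) * (s ^ t * (1 - s) ^ (n + 1))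
      = 1 / ((n : ℝ) + t + 2) := by
    intro t
    rw [intervalIntegral.integral_const_mul, betaInt (n + 1) t, choose_beta n t]
  have e2 : ∀ t : ℕ, ∫ s in (0 : ℝ)..1, ((m + 1 + t).choose t : ℝ) * (s ^ (m + 1) * (1 - s) ^ t)
      = 1 / ((m : ℝ) + t + 2) := by
    intro t
    rw [intervalIntegral.integral_const_mul, betaInt t (m + 1)]
    have h : (m + 1 + t + 1) = t + (m + 1) + 1 := by omega
    have hcomm : ((m + 1).factorial * t.factorial : ℝ) = (t.factorial * (m + 1).factorial : ℝ) := by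
      ring
    rw [h, hcomm, choose_beta m t]
  rw [Finset.sum_congr rfl (fun t _ => e1 t), Finset.sum_congr rfl (fun t _ => e2 t)]
  rw [sum_shift_harm n (m + 1), sum_shift_harm m (n + 1)]
  have h1 : n + 1 + (m + 1) = n + m + 2 := by omega
  have h2 : m + 1 + (n + 1) = n + m + 2 := by omega
  rw [h1, h2]
  have hm2 : harm (m + 2) = harm (m + 1) + 1 / ((m : ℝ) + 2) := by
    rw [harm, Finset.sum_range_succ, ← harm]; push_cast; ring_nf
  have hn2 : harm (n + 2) = harm (n + 1) + 1 / ((n : ℝ) + 2) := by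
    rw [harm, Finset.sum_range_succ, ← harm]; push_cast; ring_nf
  rw [hm2, hn2]
  have hne1 : ((n : ℝ) + 2) ≠ 0 := by positivity
  have hne2 : ((m : ℝ) + 2) ≠ 0 := by positivity
  field_simp
  ring
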